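/- Assume 0 < π0 < 1 and π2, π3 > 0. Then L_crit > 0, L_crit is a root of the equation J(L,0)·(1 − L) − π0 = 0 (equivalently, 1 − L = π0·(1 + π2·L + π3·L²)), it is the unique nonnegative root of this equation, and moreover J(L1,0)·(1 − L1) − π0 > 0 for all 0 ≤ L1 < L_crit while J(L1,0)·(1 − L1) − π0 < 0 for all L1 > L_crit. -/

import Mathlib

noncomputable section

/-- The flux `J(L1, L2)`. -/
def J (π2 π3 L1 L2 : ℝ) : ℝ :=
  1 / (1 + π2 * (L1 + L2) + π3 * (L1 ^ 2 + L2 ^ 2))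

/-- The critical length `L_crit`. -/
def Lcrit (π0 π2 π3 : ℝ) : ℝ :=
  ((1 + π0 * π2) / (2 * π0 * π3)) *
    (Real.sqrt (1 + 4 * (1 - π0) * π0 * π3 / (1 + π0 * π2) ^ 2) - 1)

/-- `L_crit > 0` is the unique nonnegative root of
`J(L,0)·(1 − L) − π0 = 0` (equivalently `1 − L = π0·(1 + π2·L + π3·L²)`), and
`J(L1,0)·(1 − L1) − π0` is positive for `0 ≤ L1 < L_crit` and negative for `L1 > L_crit`. -/
theorem Lcrit_properties (π0 π2 π3 : ℝ)
    (hπ0 : 0 < π0) (hπ0' : π0 < 1) (hπ2 : 0 < π2) (hπ3 : 0 < π3) :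
    0 < Lcrit π0 π2 π3 ∧
    J π2 π3 (Lcrit π0 π2 π3) 0 * (1 - Lcrit π0 π2 π3) - π0 = 0 ∧
    1 - Lcrit π0 π2 π3 =
      π0 * (1 + π2 * Lcrit π0 π2 π3 + π3 * (Lcrit π0 π2 π3) ^ 2) ∧
    (∀ L : ℝ, 0 ≤ L → J π2 π3 L 0 * (1 - L) - π0 = 0 → L = Lcrit π0 π2 π3) ∧
    (∀ L1 : ℝ, 0 ≤ L1 → L1 < Lcrit π0 π2 π3 → 0 < J π2 π3 L1 0 * (1 - L1) - π0) ∧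
    (∀ L1 : ℝ, Lcrit π0 π2 π3 < L1 → J π2 π3 L1 0 * (1 - L1) - π0 < 0) := by
  have hb : (0:ℝ) < 1 + π0 * π2 := by nlinarith
  set s : ℝ := Real.sqrt (1 + 4 * (1 - π0) * π0 * π3 / (1 + π0 * π2) ^ 2) with hs
  have hdpos : (0:ℝ) < 4 * (1 - π0) * π0 * π3 / (1 + π0 * π2) ^ 2 :=
    div_pos (mul_pos (mul_pos (by linarith : (0:ℝ) < 4 * (1 - π0)) hπ0) hπ3) (by positivity)
  have hs2 : s ^ 2 = 1 + 4 * (1 - π0) * π0 * π3 / (1 + π0 * π2) ^ 2 :=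
    Real.sq_sqrt (by linarith)
  have hs0 : 0 ≤ s := Real.sqrt_nonneg _
  have hs1 : 1 < s := by nlinarith [hdpos, hs2, hs0]
  have hs2' : (1 + π0 * π2) ^ 2 * s ^ 2 = (1 + π0 * π2) ^ 2 + 4 * (1 - π0) * π0 * π3 := by
    rw [hs2]; field_simp
  set L : ℝ := Lcrit π0 π2 π3 with hLdef
  have hLc : L = ((1 + π0 * π2) / (2 * π0 * π3)) * (s - 1) := rfl
  have hLpos : 0 < L := by
    rw [hLc]
    exact mul_pos (div_pos hb (by positivity)) (by linarith)
  have hLmul : L * (2 * π0 * π3) = (1 + π0 * π2) * (s - 1) := by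
    rw [hLc]; field_simp
  have hkey : π0 * π3 * L ^ 2 + (1 + π0 * π2) * L + (π0 - 1) = 0 := by
    have h4 : (2 * π0 * π3) ^ 2 * (π0 * π3 * L ^ 2 + (1 + π0 * π2) * L + (π0 - 1)) = 0 := by
      linear_combination (π0 * π3 * (L * (2 * π0 * π3) + (1 + π0 * π2) * (s - 1))
        + 2 * π0 * π3 * (1 + π0 * π2)) * hLmul + π0 * π3 * hs2'
    exact (mul_eq_zero.mp h4).resolve_left (by positivity)
  have hq : ∀ x : ℝ, 0 ≤ x → 0 < 1 + π2 * x + π3 * x ^ 2 := by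
    intro x hx; positivity
  have hJ : ∀ x : ℝ, J π2 π3 x 0 = 1 / (1 + π2 * x + π3 * x ^ 2) := by
    intro x; simp [J]
  have heq : ∀ x : ℝ, 0 ≤ x → J π2 π3 x 0 * (1 - x) - π0 =
      (1 - x - π0 * (1 + π2 * x + π3 * x ^ 2)) / (1 + π2 * x + π3 * x ^ 2) := by
    intro x hx
    rw [hJ]
    have := hq x hx
    field_simp
  have hroot : J π2 π3 L 0 * (1 - L) - π0 = 0 := by
    rw [heq L hLpos.le]
    have := hq L hLpos.le
    rw [div_eq_zero_iff]
    left; linarith [hkey]; 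
  have hfac : ∀ x : ℝ, 0 ≤ x → 0 < π0 * π3 * (x + L) + (1 + π0 * π2) := by
    intro x hx
    nlinarith [mul_nonneg (mul_pos hπ0 hπ3).le (by linarith : (0:ℝ) ≤ x + L)]
  refine ⟨hLpos, hroot, by nlinarith [hkey], ?_, ?_, ?_⟩
  · intro x hx hroot'
    rw [heq x hx] at hroot'
    have hqx := hq x hx
    have hfx : 1 - x - π0 * (1 + π2 * x + π3 * x ^ 2) = 0 :=
      (div_eq_zero_iff.mp hroot').resolve_right (ne_of_gt hqx)
    have hzero : (x - L) * (π0 * π3 * (x + L) + (1 + π0 * π2)) = 0 := by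
      linear_combination -hfx - hkey
    have := (mul_eq_zero.mp hzero).resolve_right (ne_of_gt (hfac x hx))
    linarith
  · intro x hx hxL
    rw [heq x hx]
    refine div_pos ?_ (hq x hx)
    nlinarith [hkey, mul_pos (sub_pos.mpr hxL) (hfac x hx)]
  · intro x hxL
    have hx : 0 ≤ x := le_of_lt (hLpos.trans hxL)
    rw [heq x hx]
    refine div_neg_of_neg_of_pos ?_ (hq x hx)
    nlinarith [hkey, mul_pos (sub_pos.mpr hxL) (hfac x hx)]
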